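/- For t ≥ 5, every uniquely C_t-saturated graph that is not complete contains a cycle of length at most t+1 (i.e., has girth at most t+1). -/

import Mathlib

open SimpleGraph

/-- `G` has a cycle on `t` vertices (a cycle of length `t`). -/
def HasCycleOn {V : Type*} (G : SimpleGraph V) (t : ℕ) : Prop :=
  ∃ (v : V) (w : G.Walk v v), w.IsCycle ∧ w.length = t

/-- `c` is the edge set of some cycle on `t` vertices in `G`. -/
def IsCtEdgeSet {V : Type*} (G : SimpleGraph V) (t : ℕ) (c : Set (Sym2 V)) : Prop :=
  ∃ (v : V) (w : G.Walk v v), w.IsCycle ∧ w.length = t ∧ {e | e ∈ w.edges} = c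

/-- `G` is uniquely `C_t`-saturated: it has no cycle on `t` vertices, and adding any
edge of the complement creates exactly one cycle on `t` vertices. -/
def UniquelyCSat {V : Type*} (G : SimpleGraph V) (t : ℕ) : Prop :=
  ¬ HasCycleOn G t ∧
    ∀ x y : V, x ≠ y → ¬ G.Adj x y →
      ∃! c : Set (Sym2 V), IsCtEdgeSet (G ⊔ fromEdgeSet {s(x, y)}) t c

/-- In a path starting at `u`, any edge containing `u` must be the first edge. -/
lemma firstEdge {V : Type*} {G : SimpleGraph V} {u v w : V} (p : G.Walk u v)
    (hp : p.IsPath) (he : s(u, w) ∈ p.edges) :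
    ∃ (h : G.Adj u w) (r : G.Walk w v), p = Walk.cons h r := by
  cases p with
  | nil => simp at he
  | cons h q =>
    rename_i b
    rw [Walk.edges_cons, List.mem_cons] at he
    rw [Walk.cons_isPath_iff] at hp
    rcases he with he | he
    · rcases Sym2.eq_iff.mp he with ⟨-, rfl⟩ | ⟨h1, -⟩
      · exact ⟨h, q, rfl⟩
      · exact absurd h1 h.ne
    · exact absurd (q.fst_mem_support_of_mem_edges he) hp.2

/-- A path between `u` and `u` must have length `1` if it contains the edge `s(u,v)`...
actually: a path from `u` to `v` whose edge set contains `s(u,v)` has length 1. -/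
lemma path_edge_length_one {V : Type*} {G : SimpleGraph V} {u v : V} (p : G.Walk u v)
    (hp : p.IsPath) (he : s(u, v) ∈ p.edges) : p.length = 1 := by
  obtain ⟨h, r, rfl⟩ := firstEdge p hp he
  rw [Walk.cons_isPath_iff] at hp
  rw [Walk.isPath_iff_eq_nil.mp hp.1]
  rfl

/-- From a cycle in a supergraph passing through the edge `s(x,y)`, all of whose other
edges lie in `G`, extract a path in `G` from `x` to `y` of length one less. -/
lemma path_of_cycle_through_edge {V : Type*} {G' G : SimpleGraph V} {x y : V}
    (hxy : x ≠ y) (w : G'.Walk x x) (hc : w.IsCycle) (he : s(x, y) ∈ w.edges)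
    (hsub : ∀ e ∈ w.edges, e ≠ s(x, y) → e ∈ G.edgeSet) :
    ∃ p : G.Walk x y, p.IsPath ∧ p.length + 1 = w.length := by
  cases w with
  | nil => simp at he
  | cons h q =>
    rename_i b
    have hq : q.IsPath ∧ s(x, b) ∉ q.edges := (Walk.cons_isCycle_iff q h).mp hc
    rw [Walk.edges_cons, List.mem_cons] at he
    have hsub' : ∀ e ∈ q.edges, e ≠ s(x, y) → e ∈ G.edgeSet := by
      intro e heq hne
      exact hsub e (by rw [Walk.edges_cons, List.mem_cons]; exact Or.inr heq) hne
    rcases he with he | he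
    · have hb : y = b := by
        rcases Sym2.eq_iff.mp he with ⟨-, h1⟩ | ⟨h1, -⟩
        · exact h1
        · exact absurd h1 h.ne
      subst hb
      have hsubq : ∀ e ∈ q.edges, e ∈ G.edgeSet := by
        intro e heq
        exact hsub' e heq (fun h' => hq.2 (by rwa [h'] at heq))
      refine ⟨(q.transfer G hsubq).reverse, (hq.1.transfer hsubq).reverse, ?_⟩
      simp [Walk.length_reverse, Walk.length_transfer]
    · -- s(x,y) is an edge of q; q.reverse is a path from x to b containing it as first edge
      obtain ⟨hadj, r, hr⟩ := firstEdge q.reverse hq.1.reverse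
        (by rw [Walk.edges_reverse, List.mem_reverse]; exact he)
      have hrp : r.IsPath ∧ x ∉ r.support := by
        have h' := hq.1.reverse
        rw [hr, Walk.cons_isPath_iff] at h'
        exact h'
      have hxyr : s(x, y) ∉ r.edges := by
        have h' := hq.1.reverse.edges_nodup
        rw [hr, Walk.edges_cons, List.nodup_cons] at h'
        exact h'.1
      have hby : b ≠ y := by
        rintro rfl
        exact hq.2 he
      have hGxb : G.Adj x b := by
        rw [← SimpleGraph.mem_edgeSet]
        refine hsub s(x, b) (by rw [Walk.edges_cons]; exact List.mem_cons_self) ?_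
        intro h'
        rcases Sym2.eq_iff.mp h' with ⟨-, h1⟩ | ⟨h1, -⟩
        · exact hby h1
        · exact hxy h1
      have hsubr : ∀ e ∈ r.edges, e ∈ G.edgeSet := by
        intro e her
        refine hsub' e ?_ (fun h' => hxyr (h' ▸ her))
        have : e ∈ q.reverse.edges := by rw [hr, Walk.edges_cons]; exact List.mem_cons_of_mem _ her
        rwa [Walk.edges_reverse, List.mem_reverse] at this
      refine ⟨Walk.cons hGxb (r.transfer G hsubr).reverse, ?_, ?_⟩
      · rw [Walk.cons_isPath_iff]
        refine ⟨(hrp.1.transfer hsubr).reverse, ?_⟩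
        rw [Walk.support_reverse, List.mem_reverse, Walk.support_transfer]
        exact hrp.2
      · have hql : q.length = r.length + 1 := by
          have := congrArg Walk.length hr
          rwa [Walk.length_reverse, Walk.length_cons] at this
        simp [Walk.length_cons, Walk.length_reverse, Walk.length_transfer, hql]

/-- From a path of length ≥ 3 from `a` to `b` together with a vertex `c` adjacent to both
ends, extract a cycle of length at most `p.length + 2`. -/
lemma cycle_of_path {V : Type*} [DecidableEq V] {G : SimpleGraph V} {a b c : V}
    (p : G.Walk a b) (hp : p.IsPath) (hlen : 3 ≤ p.length) (hac : G.Adj a c)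
    (hcb : G.Adj c b) (hab : a ≠ b) :
    ∃ l : ℕ, l ≤ p.length + 2 ∧ HasCycleOn G l := by
  by_cases hcs : c ∈ p.support
  · have hp1 : (p.takeUntil c hcs).IsPath := hp.takeUntil hcs
    have hp2 : (p.dropUntil c hcs).IsPath := hp.dropUntil hcs
    have hlen12 : (p.takeUntil c hcs).length + (p.dropUntil c hcs).length = p.length := by
      have := congrArg Walk.length (p.take_spec hcs)
      rwa [Walk.length_append] at this
    by_cases h1 : s(c, a) ∈ (p.takeUntil c hcs).edges
    · have hl1 : (p.takeUntil c hcs).length = 1 :=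
        path_edge_length_one _ hp1 (by rwa [Sym2.eq_swap])
      by_cases h2 : s(b, c) ∈ (p.dropUntil c hcs).edges
      · exfalso
        have hl2 : (p.dropUntil c hcs).length = 1 := by
          have := path_edge_length_one (p.dropUntil c hcs).reverse hp2.reverse
            (by rw [Walk.edges_reverse, List.mem_reverse]; exact h2)
          rwa [Walk.length_reverse] at this
        omega
      · refine ⟨(p.dropUntil c hcs).length + 1, by omega,
          b, Walk.cons hcb.symm (p.dropUntil c hcs), ?_, by simp⟩
        exact (Walk.cons_isCycle_iff _ _).mpr ⟨hp2, h2⟩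
    · refine ⟨(p.takeUntil c hcs).length + 1, by omega,
        c, Walk.cons hac.symm (p.takeUntil c hcs), ?_, by simp⟩
      exact (Walk.cons_isCycle_iff _ _).mpr ⟨hp1, h1⟩
  · refine ⟨p.length + 2, le_refl _,
      a, Walk.cons hac (Walk.cons hcb p.reverse), ?_, by simp⟩
    refine (Walk.cons_isCycle_iff _ _).mpr ⟨?_, ?_⟩
    · rw [Walk.cons_isPath_iff]
      refine ⟨hp.reverse, ?_⟩
      rwa [Walk.support_reverse, List.mem_reverse]
    · rw [Walk.edges_cons, List.mem_cons]
      rintro (h' | h')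
      · rcases Sym2.eq_iff.mp h' with ⟨h1, -⟩ | ⟨h1, -⟩
        · exact hac.ne h1
        · exact hab h1
      · rw [Walk.edges_reverse, List.mem_reverse] at h'
        exact hcs (p.snd_mem_support_of_mem_edges h')

/-- Saturation extraction: if `G` has no `C_t` but `G + xy` does, there is a path of
length `t - 1` from `x` to `y` in `G`. -/
lemma exists_path_of_sat {V : Type*} [DecidableEq V] {G : SimpleGraph V} {t : ℕ}
    (hnt : ¬ HasCycleOn G t) {x y : V} (hxy : x ≠ y)
    (h : HasCycleOn (G ⊔ fromEdgeSet {s(x, y)}) t) :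
    ∃ p : G.Walk x y, p.IsPath ∧ p.length + 1 = t := by
  set G' := G ⊔ fromEdgeSet {s(x, y)} with hG'
  have hGE : ∀ e ∈ G'.edgeSet, e ≠ s(x, y) → e ∈ G.edgeSet := by
    intro e he hne
    rw [hG', edgeSet_sup, edgeSet_fromEdgeSet] at he
    rcases he with he | ⟨he, -⟩
    · exact he
    · exact absurd he hne
  obtain ⟨v, w, hc, hl⟩ := h
  have hmem : s(x, y) ∈ w.edges := by
    by_contra hne
    refine hnt ⟨v, w.transfer G ?_, hc.transfer _, by rw [Walk.length_transfer]; exact hl⟩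
    intro e he
    exact hGE e (w.edges_subset_edgeSet he) (fun h' => hne (h' ▸ he))
  have hx : x ∈ w.support := w.fst_mem_support_of_mem_edges hmem
  have hrotlen : (w.rotate x hx).length = w.length := by
    have h1 := congrArg Walk.length (w.take_spec hx)
    rw [Walk.length_append] at h1
    have h2 : (w.rotate x hx).length
        = (w.dropUntil x hx).length + (w.takeUntil x hx).length := by
      rw [Walk.rotate, Walk.length_append]
    omega
  have hmem' : s(x, y) ∈ (w.rotate x hx).edges := (w.rotate_edges x hx).mem_iff.mpr hmem
  obtain ⟨p, hp, hpl⟩ := path_of_cycle_through_edge hxy (w.rotate x hx) (hc.rotate hx) hmem'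
    (fun e he hne => hGE e ((w.rotate x hx).edges_subset_edgeSet he) hne)
  exact ⟨p, hp, by omega⟩

/-- For `t ≥ 5`, every non-complete uniquely `C_t`-saturated graph has girth at most
`t + 1`: it contains a cycle of length at most `t + 1`. -/
theorem stmt_7 {V : Type*} [Fintype V] (G : SimpleGraph V) (t : ℕ) (ht : 5 ≤ t)
    (hG : UniquelyCSat G t) (hnc : G ≠ ⊤) :
    ∃ l : ℕ, l ≤ t + 1 ∧ HasCycleOn G l := by
  classical
  obtain ⟨hno, hsat⟩ := hG
  obtain ⟨x, y, hxy, hnadj⟩ : ∃ x y : V, x ≠ y ∧ ¬ G.Adj x y := by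
    by_contra h
    push_neg at h
    apply hnc
    ext u v
    simp only [top_adj]
    exact ⟨fun h' => h'.ne, fun h' => h u v h'⟩
  have hcyc : HasCycleOn (G ⊔ fromEdgeSet {s(x, y)}) t := by
    obtain ⟨c, hc, -⟩ := hsat x y hxy hnadj
    obtain ⟨v, w, hw, hwl, -⟩ := hc
    exact ⟨v, w, hw, hwl⟩
  obtain ⟨P, hP, hPl⟩ := exists_path_of_sat hno hxy hcyc
  cases P with
  | nil => simp at hPl; omega
  | cons h01 P' =>
    rename_i v1
    cases P' with
    | nil => rw [Walk.length_cons, Walk.length_nil] at hPl; omega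
    | cons h12 P'' =>
      rename_i v2
      rw [Walk.cons_isPath_iff] at hP
      have hP' := hP.1
      rw [Walk.cons_isPath_iff] at hP'
      have hxv2 : x ≠ v2 := by
        rintro rfl
        exact hP.2 (by rw [Walk.support_cons]; exact List.mem_cons_of_mem _ P''.start_mem_support)
      by_cases hadj02 : G.Adj x v2
      · refine ⟨3, by omega, x,
          Walk.cons hadj02 (Walk.cons h12.symm (Walk.cons h01.symm Walk.nil)), ?_, by simp⟩
        refine (Walk.cons_isCycle_iff _ _).mpr ⟨?_, ?_⟩
        · rw [Walk.cons_isPath_iff, Walk.cons_isPath_iff]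
          refine ⟨⟨Walk.IsPath.nil, by simp [h01.ne']⟩, ?_⟩
          simp only [Walk.support_cons, Walk.support_nil, List.mem_cons, List.mem_singleton,
            List.not_mem_nil]
          push_neg
          exact ⟨h12.ne', fun h => (hxv2 h.symm).elim, trivial⟩
        · simp only [Walk.edges_cons, Walk.edges_nil, List.mem_cons, List.not_mem_nil,
            or_false]
          push_neg
          constructor
          · intro h'
            rcases Sym2.eq_iff.mp h' with ⟨h1, -⟩ | ⟨h1, -⟩
            · exact hxv2 h1
            · exact h01.ne h1
          · intro h'
            rcases Sym2.eq_iff.mp h' with ⟨h1, -⟩ | ⟨-, h1⟩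
            · exact h01.ne h1
            · exact h12.ne h1.symm
      · have hcyc2 : HasCycleOn (G ⊔ fromEdgeSet {s(x, v2)}) t := by
          obtain ⟨c, hc, -⟩ := hsat x v2 hxv2 hadj02
          obtain ⟨v, w, hw, hwl, -⟩ := hc
          exact ⟨v, w, hw, hwl⟩
        obtain ⟨Q, hQ, hQl⟩ := exists_path_of_sat hno hxv2 hcyc2
        obtain ⟨l, hl, hcl⟩ := cycle_of_path Q hQ (by omega) h01 h12 hxv2
        exact ⟨l, by omega, hcl⟩
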